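/- The Fourier transform of the Sinc kernel K(t) = σ² sin(Δπt)/(Δπt) (with K(0) = σ²) equals (σ²/Δ) on the interval (-Δ/2, Δ/2) and 0 outside the closed interval [-Δ/2, Δ/2], where Δ > 0; in particular, the spectral support of the Sinc kernel is the compact interval [-Δ/2, Δ/2]. -/

import Mathlib

open MeasureTheory Real FourierTransform

/-- The Sinc kernel with magnitude `σ` and width `Δ`. -/
noncomputable def sincKernel (σ Δ t : ℝ) : ℝ :=
  if t = 0 then σ ^ 2 else σ ^ 2 * Real.sin (Δ * π * t) / (Δ * π * t)

open RealInnerProductSpace in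
theorem stmt_8 (σ Δ : ℝ) (hσ : 0 < σ) (hΔ : 0 < Δ) :
    ∃ G : ℝ → ℂ,
      (∀ ξ ∈ Set.Ioo (-(Δ / 2)) (Δ / 2), G ξ = ((σ ^ 2 / Δ : ℝ) : ℂ)) ∧
      (∀ ξ : ℝ, ξ ∉ Set.Icc (-(Δ / 2)) (Δ / 2) → G ξ = 0) ∧
      ∀ t : ℝ, FourierTransformInv.fourierInv G t = ((sincKernel σ Δ t : ℝ) : ℂ) := by
  refine ⟨Set.indicator (Set.Ioo (-(Δ / 2)) (Δ / 2)) (fun _ => ((σ ^ 2 / Δ : ℝ) : ℂ)), ?_, ?_, ?_⟩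
  · intro ξ hξ
    simp [Set.indicator_of_mem hξ]
  · intro ξ hξ
    exact Set.indicator_of_notMem (fun h => hξ (Set.Ioo_subset_Icc_self h)) _
  · intro t
    rw [Real.fourierInv_eq']
    have h1 : ∀ v : ℝ, Complex.exp ((↑(2 * π * ⟪v, t⟫) * Complex.I)) •
        Set.indicator (Set.Ioo (-(Δ / 2)) (Δ / 2)) (fun _ => ((σ ^ 2 / Δ : ℝ) : ℂ)) v
        = Set.indicator (Set.Ioo (-(Δ / 2)) (Δ / 2))
          (fun v => Complex.exp (((2 * π * t : ℝ) * Complex.I) * v) * ((σ ^ 2 / Δ : ℝ) : ℂ)) v := by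
      intro v
      by_cases hv : v ∈ Set.Ioo (-(Δ / 2)) (Δ / 2) <;>
        simp [hv, RCLike.inner_apply, smul_eq_mul, mul_comm, mul_assoc, mul_left_comm]
    simp_rw [h1]
    rw [integral_indicator measurableSet_Ioo, ← integral_Ioc_eq_integral_Ioo,
      ← intervalIntegral.integral_of_le (by linarith : -(Δ/2) ≤ Δ/2)]
    rw [intervalIntegral.integral_mul_const]
    by_cases ht : t = 0
    · subst ht
      simp only [sincKernel, if_pos rfl]
      norm_num
      rw [mul_comm, div_mul_cancel₀ _ (by exact_mod_cast hΔ.ne' : (Δ:ℂ) ≠ 0)]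
    · have hc : ((2 * π * t : ℝ) : ℂ) * Complex.I ≠ 0 := by
        apply mul_ne_zero _ Complex.I_ne_zero
        exact_mod_cast mul_ne_zero (mul_ne_zero two_ne_zero pi_ne_zero) ht
      rw [integral_exp_mul_complex hc]
      simp only [sincKernel, if_neg ht]
      have h2 : ((2*π*t:ℝ):ℂ)*Complex.I*((Δ/2 : ℝ):ℂ) = ((π*Δ*t:ℝ):ℂ)*Complex.I := by push_cast; ring
      have h3 : ((2*π*t:ℝ):ℂ)*Complex.I*((-(Δ/2) : ℝ):ℂ) = ((-(π*Δ*t):ℝ):ℂ)*Complex.I := by push_cast; ring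
      rw [h2, h3, Complex.exp_mul_I, Complex.exp_mul_I]
      push_cast
      rw [Complex.cos_neg, Complex.sin_neg]
      have hΔπt : ((Δ:ℂ) * π * t) ≠ 0 := by
        exact_mod_cast mul_ne_zero (mul_ne_zero (by exact_mod_cast hΔ.ne') (by exact_mod_cast pi_ne_zero)) (by exact_mod_cast ht)
      have hπ : (π:ℂ) ≠ 0 := by exact_mod_cast pi_ne_zero
      have hΔc : (Δ:ℂ) ≠ 0 := by exact_mod_cast hΔ.ne'
      have htc : (t:ℂ) ≠ 0 := by exact_mod_cast ht
      field_simp [hπ, hΔc, htc, Complex.I_ne_zero]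
      ring_nf
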